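/- Let Ω be a compact Hausdorff space and F : Ω → ℓ^p (1 ≤ p ≤ ∞) a function whose component functions f_i : Ω → ℂ are all continuous. Then F is continuous if and only if the image F(Ω) is totally bounded in ℓ^p. -/
import Mathlib


open scoped ENNReal

/-- A function `F : Ω → ℓ^p` on a compact Hausdorff space with continuous component
functions is continuous iff its image is totally bounded in `ℓ^p`. -/
theorem continuous_iff_image_totallyBounded {Ω : Type*} [TopologicalSpace Ω]
    [CompactSpace Ω] [T2Space Ω] (p : ℝ≥0∞) [Fact (1 ≤ p)]
    (f : ℕ → Ω → ℂ) (hf : ∀ i, Continuous (f i))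
    (F : Ω → lp (fun _ : ℕ => ℂ) p) (hF : ∀ (s : Ω) (i : ℕ), F s i = f i s) :
    Continuous F ↔ TotallyBounded (Set.range F) := by
  have hp0 : p ≠ 0 := (lt_of_lt_of_le zero_lt_one (Fact.out)).ne'
  constructor
  · intro hFc
    exact (isCompact_range hFc).totallyBounded
  · intro htb
    have hK : IsCompact (closure (Set.range F)) :=
      TotallyBounded.isCompact_of_isClosed htb.closure isClosed_closure
    have hπ : Continuous (fun x : lp (fun _ : ℕ => ℂ) p => (fun i => x i : ∀ _ : ℕ, ℂ)) := by
      apply continuous_pi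
      intro i
      have hlip : LipschitzWith 1 (fun x : lp (fun _ : ℕ => ℂ) p => x i) := by
        apply LipschitzWith.of_dist_le_mul
        intro x y
        simp only [one_mul, dist_eq_norm]
        have := lp.norm_apply_le_norm hp0 (x - y) i
        simpa using this
      exact hlip.continuous
    set K := closure (Set.range F) with hKdef
    haveI : CompactSpace K := isCompact_iff_compactSpace.mp hK
    let g : K → ∀ _ : ℕ, ℂ := fun x => (fun i => (x : lp (fun _ : ℕ => ℂ) p) i)
    have hg : Continuous g := hπ.comp continuous_subtype_val
    have hginj : Function.Injective g := by
      intro a b hab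
      apply Subtype.ext
      ext i
      exact congrFun hab i
    have hemb : Topology.IsClosedEmbedding g := hg.isClosedEmbedding hginj
    let G : Ω → K := fun s => ⟨F s, subset_closure (Set.mem_range_self s)⟩
    have hGg : Continuous (g ∘ G) := by
      apply continuous_pi
      intro i
      have : (fun s => (g ∘ G) s i) = f i := by
        funext s
        exact hF s i
      exact this ▸ hf i
    have hG : Continuous G := hemb.toIsEmbedding.continuous_iff.mpr hGg
    exact continuous_subtype_val.comp hG
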